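/- Let M be a topological space with basepoint x₀, fix 0 < ε < 1/6, and let σ : [0,ε] → M be a stick. Then for every s ∈ [0,1] and every γ ∈ Ω^σM, the loop r(s,γ) lies in ℋ if and only if s = 0 or s = 1. Consequently ℋ ∩ r([0,1] × Ω^σM) = r({0,1} × Ω^σM). -/

import Mathlib

open Set

/-- The based loop space of `M` at `x₀`: continuous maps `[0,1] → M` sending both
endpoints to `x₀`, with the compact-open topology. -/
abbrev OmegaLoop (M : Type*) [TopologicalSpace M] (x₀ : M) : Type _ :=
  {γ : C(unitInterval, M) // γ 0 = x₀ ∧ γ 1 = x₀}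

/-- The subspace `Ω^σ M` of loops following the stick `σ` on `[0,ε]` and its reverse on
`[1-ε,1]`. -/
abbrev StickOmegaLoop (M : Type*) [TopologicalSpace M] (x₀ : M) (ε : ℝ) (σ : ℝ → M) :
    Type _ :=
  {γ : OmegaLoop M x₀ // ∀ t : unitInterval,
    ((t : ℝ) ≤ ε → γ.1 t = σ t) ∧ (1 - ε ≤ (t : ℝ) → γ.1 t = σ (1 - (t : ℝ)))}

/-- The set `ℋ` of half-constant loops: loops constant at `x₀` on `[0,1/2]` or on
`[1/2,1]`. -/
def HalfConstant (M : Type*) [TopologicalSpace M] (x₀ : M) : Set (OmegaLoop M x₀) :=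
  {γ | (∀ t : unitInterval, (t : ℝ) ≤ 1/2 → γ.1 t = x₀) ∨
    (∀ t : unitInterval, 1/2 ≤ (t : ℝ) → γ.1 t = x₀)}

/-- For a stick `σ` (with `0 < ε < 1/6`), a reparametrized loop `r(s,γ)`
with `γ ∈ Ω^σM` is half-constant if and only if `s = 0` or `s = 1`; consequently
`ℋ ∩ r([0,1] × Ω^σM) = r({0,1} × Ω^σM)`. -/
theorem halfConstant_inter_reparametrization
    {M : Type*} [TopologicalSpace M]
    (x₀ : M) (ε : ℝ) (hε0 : 0 < ε) (hε : ε < 1/6)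
    (σ : ℝ → M) (hσcont : ContinuousOn σ (Icc 0 ε)) (hσinj : InjOn σ (Icc 0 ε))
    (hσ0 : σ 0 = x₀)
    (r : C(unitInterval × OmegaLoop M x₀, OmegaLoop M x₀))
    (hr : ∀ (s : unitInterval) (γ : OmegaLoop M x₀) (t : unitInterval),
      ((t : ℝ) ≤ 1/2 →
        (r (s, γ)).1 t = γ.1 (projIcc 0 1 zero_le_one (2 * (s : ℝ) * (t : ℝ)))) ∧
      (1/2 ≤ (t : ℝ) →
        (r (s, γ)).1 t =
          γ.1 (projIcc 0 1 zero_le_one (2 * (1 - (s : ℝ)) * (t : ℝ) - 1 + 2 * (s : ℝ))))) :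
    (∀ (s : unitInterval) (γ : StickOmegaLoop M x₀ ε σ),
      r (s, γ.1) ∈ HalfConstant M x₀ ↔ s = 0 ∨ s = 1) ∧
    HalfConstant M x₀ ∩
        Set.range (fun p : unitInterval × StickOmegaLoop M x₀ ε σ => r (p.1, p.2.1)) =
      (fun p : unitInterval × StickOmegaLoop M x₀ ε σ => r (p.1, p.2.1)) ''
        {p | p.1 = 0 ∨ p.1 = 1} := by
  have hσne : ∀ u : ℝ, 0 < u → u ≤ ε → σ u ≠ x₀ := by
    intro u hu0 huε h
    have : u = 0 := hσinj ⟨hu0.le, huε⟩ ⟨le_refl 0, hε0.le⟩ (by rw [h, hσ0])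
    linarith
  have main : ∀ (s : unitInterval) (γ : StickOmegaLoop M x₀ ε σ),
      r (s, γ.1) ∈ HalfConstant M x₀ ↔ s = 0 ∨ s = 1 := by
    intro s γ
    constructor
    · intro h
      by_contra hc
      push_neg at hc
      obtain ⟨hs0, hs1⟩ := hc
      have hs0' : (0:ℝ) < s := lt_of_le_of_ne s.2.1 (fun e => hs0 (Subtype.ext e.symm))
      have hs1' : (s:ℝ) < 1 := lt_of_le_of_ne s.2.2 (fun e => hs1 (Subtype.ext e))
      cases h with
      | inl h =>
        set u : ℝ := min ε s with hu
        have hu0 : 0 < u := lt_min hε0 hs0'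
        have huε : u ≤ ε := min_le_left _ _
        have hus : u ≤ s := min_le_right _ _
        set t : ℝ := u / (2 * s) with ht
        have ht0 : 0 ≤ t := by positivity
        have ht2 : t ≤ 1/2 := by
          rw [ht, div_le_iff₀ (by positivity)]
          nlinarith
        have ht1 : t ≤ 1 := by linarith
        have key := (hr s γ.1 ⟨t, ht0, ht1⟩).1 ht2
        have harg : 2 * (s:ℝ) * t = u := by
          rw [ht]; field_simp
        rw [harg, projIcc_of_mem zero_le_one ⟨hu0.le, by linarith⟩] at key
        have hγ := (γ.2 ⟨u, hu0.le, by linarith⟩).1 huε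
        have hx := h ⟨t, ht0, ht1⟩ ht2
        exact hσne u hu0 huε (by rw [← hγ, ← key, hx])
      | inr h =>
        set u : ℝ := max (1 - ε) s with hu
        have hu1 : u < 1 := max_lt (by linarith) hs1'
        have huε : 1 - ε ≤ u := le_max_left _ _
        have hus : (s:ℝ) ≤ u := le_max_right _ _
        have hu0 : 0 ≤ u := le_trans (by linarith) huε
        set t : ℝ := (u + 1 - 2 * s) / (2 * (1 - s)) with ht
        have hd : (0:ℝ) < 2 * (1 - s) := by linarith
        have ht2 : 1/2 ≤ t := by
          rw [ht, le_div_iff₀ hd]; nlinarith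
        have ht1 : t ≤ 1 := by
          rw [ht, div_le_one hd]; nlinarith
        have ht0 : 0 ≤ t := by linarith
        have key := (hr s γ.1 ⟨t, ht0, ht1⟩).2 ht2
        have harg : 2 * (1 - (s:ℝ)) * t - 1 + 2 * s = u := by
          rw [ht]; field_simp [show (1 - (s:ℝ)) ≠ 0 by linarith]; ring
        rw [harg, projIcc_of_mem zero_le_one ⟨hu0, hu1.le⟩] at key
        have hγ := (γ.2 ⟨u, hu0, hu1.le⟩).2 huε
        have hx := h ⟨t, ht0, ht1⟩ ht2
        exact hσne (1 - u) (by linarith) (by linarith) (by rw [← hγ, ← key, hx])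
    · rintro (rfl | rfl)
      · left
        intro t ht
        have key := (hr 0 γ.1 t).1 ht
        have : (2 * ((0:unitInterval):ℝ) * (t:ℝ)) = 0 := by norm_num
        rw [this, projIcc_of_mem zero_le_one (by norm_num : (0:ℝ) ∈ Icc (0:ℝ) 1)] at key
        rw [key]
        exact γ.1.2.1
      · right
        intro t ht
        have key := (hr 1 γ.1 t).2 ht
        have : (2 * (1 - ((1:unitInterval):ℝ)) * (t:ℝ) - 1 + 2 * ((1:unitInterval):ℝ)) = 1 := by
          norm_num
        rw [this, projIcc_of_mem zero_le_one (by norm_num : (1:ℝ) ∈ Icc (0:ℝ) 1)] at key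
        rw [key]
        exact γ.1.2.2
  refine ⟨main, ?_⟩
  ext g
  constructor
  · rintro ⟨hg, ⟨s, γ⟩, rfl⟩
    exact ⟨(s, γ), (main s γ).1 hg, rfl⟩
  · rintro ⟨⟨s, γ⟩, hp, rfl⟩
    exact ⟨(main s γ).2 hp, ⟨(s, γ), rfl⟩⟩
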